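/- A monomial x_{a_1} x_{a_2} ⋯ x_{a_r} in K[x_1,…,x_n] with a_1 ≤ a_2 ≤ ⋯ ≤ a_r is the leading term (with respect to degree lexicographic order with x_1 > ⋯ > x_n) of an r×r minor of some Hankel matrix H_t (with t ≥ r rows and entries x_1,…,x_n) if and only if the index sequence is a chain, i.e., a_i + 1 < a_{i+1} for all 1 ≤ i < r. -/

import Mathlib

open MvPolynomial

noncomputable section

/-- Total degree of an exponent vector. -/
def expDeg (u : ℕ →₀ ℕ) : ℕ := u.sum fun _ e => e

/-- Degree lexicographic order induced by `x_1 > x_2 > ⋯` :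
`DegLexLt u v` means the monomial with exponent `u` is strictly smaller than
the one with exponent `v`. -/
def DegLexLt (u v : ℕ →₀ ℕ) : Prop :=
  expDeg u < expDeg v ∨ (expDeg u = expDeg v ∧ toLex u < toLex v)

/-- `u` is the exponent vector of the (unique, strictly largest) leading term of `f`
with respect to degree lexicographic order. -/
def IsLeadMono {K : Type*} [CommRing K] (f : MvPolynomial ℕ K) (u : ℕ →₀ ℕ) : Prop :=
  u ∈ f.support ∧ ∀ v ∈ f.support, v ≠ u → DegLexLt v u

/-- The initial ideal of `I` : the ideal generated by the leading monomials of
elements of `I`. -/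
def initialIdeal {K : Type*} [CommRing K] (I : Ideal (MvPolynomial ℕ K)) :
    Ideal (MvPolynomial ℕ K) :=
  Ideal.span {m | ∃ f ∈ I, ∃ u, IsLeadMono f u ∧ m = monomial u (1 : K)}

/-- `a 1, …, a r` is a chain (1-indexed strictly increasing sequence with gaps ≥ 2). -/
def IsChainOn (r : ℕ) (a : ℕ → ℕ) : Prop := ∀ i, 1 ≤ i → i < r → a i + 1 < a (i + 1)

/-- Exponent vector of the monomial `x_{a 1} ⋯ x_{a r}`. -/
def chainExp (r : ℕ) (a : ℕ → ℕ) : ℕ →₀ ℕ := ∑ i ∈ Finset.Icc 1 r, Finsupp.single (a i) 1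

/-- The maximal minor of a Hankel matrix whose main diagonal is `x_{a 1}, …, x_{a r}`;
its (i,j) entry (0-indexed) is `x_{a (j+1) + i - j}`. -/
def minorOfChain (K : Type*) [CommRing K] (r : ℕ) (a : ℕ → ℕ) : MvPolynomial ℕ K :=
  (Matrix.of fun i j : Fin r =>
    (X (a ((j : ℕ) + 1) + (i : ℕ) - (j : ℕ)) : MvPolynomial ℕ K)).det

/-- The chain `a` is the diagonal chain of a maximal minor of the Hankel matrix with
`r` rows built from the variables `x_lo, …, x_hi`. -/
def FitsHankel (lo hi r : ℕ) (a : ℕ → ℕ) : Prop :=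
  IsChainOn r a ∧ ∀ j, 1 ≤ j → j ≤ r → lo + (j - 1) ≤ a j ∧ a j + (r - j) ≤ hi

/-- The ideal of maximal minors of the Hankel matrix with `r` rows on `x_lo, …, x_hi`. -/
def hankelIdeal (K : Type*) [CommRing K] (lo hi r : ℕ) : Ideal (MvPolynomial ℕ K) :=
  Ideal.span {f | ∃ a : ℕ → ℕ, FitsHankel lo hi r a ∧ f = minorOfChain K r a}

/-- `Interval(a) = ⋃_{2 ≤ i ≤ r} {a_i - 1, a_i}`. -/
def IntervalOf (r : ℕ) (a : ℕ → ℕ) : Set ℕ :=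
  {x | ∃ i, 2 ≤ i ∧ i ≤ r ∧ (x = a i - 1 ∨ x = a i)}

/- Control functions with Δ = 0. -/
def omegaD (r s : ℕ) : ℕ := if r < s then r else s - 1
def omegaC (r s : ℕ) : ℕ := if r ≤ s then r else s
def omegaAD (r s : ℕ) : ℕ := if r ≤ s then r - 1 else s

/-- The three standard-form conditions for a pair of chains, with bounds
`d = Ω_d`, `c = Ω_c`, `ad = Ω_ad`. -/
def StdPairCond (d c ad r s : ℕ) (a b : ℕ → ℕ) : Prop :=
  ((∀ i, 1 ≤ i → i ≤ d → a i ≤ b (i + 1)) ∨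
    (∃ h, 1 ≤ h ∧ h ≤ d ∧ b (h + 1) < a h ∧
      ∀ i, h ≤ i → i ≤ d → a i ∈ IntervalOf s b)) ∧
  ((∀ i, 1 ≤ i → i ≤ c → a i ≤ b i) ∨
    (∃ h, 1 ≤ h ∧ h ≤ c ∧ b h < a h ∧
      ∀ i, h ≤ i → i ≤ c → a i ∈ IntervalOf s b)) ∧
  ((∀ i, 1 ≤ i → i ≤ ad → b i ≤ a (i + 1)) ∨
    (∃ h, 1 ≤ h ∧ h ≤ ad ∧ a (h + 1) < b h ∧
      ∀ i, h ≤ i → i ≤ ad → b i ∈ IntervalOf r a))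

/-- Standard form for a pair of (unlabeled) chains, with Δ = 0. -/
def StdPair (r s : ℕ) (a b : ℕ → ℕ) : Prop :=
  StdPairCond (omegaD r s) (omegaC r s) (omegaAD r s) r s a b

def HasDiagRel (r s : ℕ) (a b : ℕ → ℕ) : Prop :=
  ∃ h k, 1 ≤ h ∧ h ≤ omegaD r s ∧ h + 1 ≤ k ∧ k ≤ s ∧ b k < a h ∧ a h ∉ IntervalOf s b

def HasColRel (r s : ℕ) (a b : ℕ → ℕ) : Prop :=
  ∃ h, 1 ≤ h ∧ h ≤ omegaC r s ∧ b h < a h ∧ a h ∉ IntervalOf s b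

def HasADRel (r s : ℕ) (a b : ℕ → ℕ) : Prop :=
  ∃ h k, 1 ≤ h ∧ h ≤ omegaAD r s ∧ h + 1 ≤ k ∧ k ≤ r ∧ a k < b h ∧ b h ∉ IntervalOf r a

/-- A diagonal relation move (swap of a block of entries), with Ω_d bound `d`. -/
def DiagMoveP (d s : ℕ) (a b a' b' : ℕ → ℕ) : Prop :=
  ∃ h k v, 1 ≤ h ∧ h ≤ d ∧ h + 1 ≤ k ∧ k ≤ s ∧ b k < a h ∧ a h ∉ IntervalOf s b ∧
    v ≤ h - 1 ∧ (∀ i, i ≤ v → b (k - i) < a (h - i)) ∧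
    (v ≠ h - 1 → a (h - v - 1) ≤ b (k - v - 1)) ∧
    (∀ i, a' i = if h - v ≤ i ∧ i ≤ h then b (i + k - h) else a i) ∧
    (∀ i, b' i = if k - v ≤ i ∧ i ≤ k then a (i + h - k) else b i)

/-- A column-wise relation move, with Ω_c bound `c`. -/
def ColMoveP (c s : ℕ) (a b a' b' : ℕ → ℕ) : Prop :=
  ∃ h v, 1 ≤ h ∧ h ≤ c ∧ b h < a h ∧ a h ∉ IntervalOf s b ∧
    v ≤ h - 1 ∧ (∀ i, i ≤ v → b (h - i) < a (h - i)) ∧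
    (v ≠ h - 1 → a (h - v - 1) ≤ b (h - v - 1)) ∧
    (∀ i, a' i = if h - v ≤ i ∧ i ≤ h then b i else a i) ∧
    (∀ i, b' i = if h - v ≤ i ∧ i ≤ h then a i else b i)

/-- An anti-diagonal relation move, with Ω_ad bound `ad`. -/
def ADMoveP (ad r : ℕ) (a b a' b' : ℕ → ℕ) : Prop :=
  ∃ h k v, 1 ≤ h ∧ h ≤ ad ∧ h + 1 ≤ k ∧ k ≤ r ∧ a k < b h ∧ b h ∉ IntervalOf r a ∧
    v ≤ h - 1 ∧ (∀ i, i ≤ v → a (k - i) < b (h - i)) ∧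
    (v ≠ h - 1 → b (h - v - 1) ≤ a (k - v - 1)) ∧
    (∀ i, a' i = if k - v ≤ i ∧ i ≤ k then b (i + h - k) else a i) ∧
    (∀ i, b' i = if h - v ≤ i ∧ i ≤ h then a (i + k - h) else b i)

/-- A relation move on a pair of (unlabeled) chains (Δ = 0). -/
def Move (r s : ℕ) (a b a' b' : ℕ → ℕ) : Prop :=
  DiagMoveP (omegaD r s) s a b a' b' ∨ ColMoveP (omegaC r s) s a b a' b' ∨
    ADMoveP (omegaAD r s) r a b a' b'

/- Labels and labeled chains, for the family of close cuts. -/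
def IsLabel (n : ℕ) (σ : ℕ × ℕ) : Prop :=
  σ = (1, n) ∨ σ = (1, n - 1) ∨ σ = (2, n) ∨ σ = (2, n - 1)

def LabeledChain (n : ℕ) (σ : ℕ × ℕ) (r : ℕ) (a : ℕ → ℕ) : Prop :=
  IsLabel n σ ∧ 1 ≤ r ∧ FitsHankel σ.1 σ.2 r a

/-- Order of labels: (1,n-1) > (1,n) > (2,n-1) > (2,n). -/
def labelRank (n : ℕ) (σ : ℕ × ℕ) : ℕ :=
  if σ = (1, n - 1) then 3 else if σ = (1, n) then 2 else if σ = (2, n - 1) then 1 else 0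

/-- `(σ,a) ≥_c (γ,b)`. -/
def GeC (n : ℕ) (σ : ℕ × ℕ) (r : ℕ) (a : ℕ → ℕ) (γ : ℕ × ℕ) (s : ℕ) (b : ℕ → ℕ) : Prop :=
  labelRank n γ < labelRank n σ ∨
    (σ = γ ∧ (chainExp s b = chainExp r a ∨ DegLexLt (chainExp s b) (chainExp r a)))

/-- The function Δ for a pair of labeled chains. -/
def delta (n : ℕ) (σ γ : ℕ × ℕ) (r s : ℕ) (a b : ℕ → ℕ) : ℕ :=
  if (r ≤ s ∧ a r = n ∧ γ.2 = n - 1) ∨ (s < r ∧ b s = n ∧ σ.2 = n - 1) then 1 else 0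

def omegaD' (Δ r s : ℕ) : ℕ := if r < s then r - Δ else s - 1
def omegaC' (Δ r s : ℕ) : ℕ := if r ≤ s then r - Δ else s
def omegaAD' (Δ r s : ℕ) : ℕ := if r ≤ s then r - 1 else s - Δ

/-- Standard form for a pair of labeled chains `(σ,a) ≥_c (γ,b)`. -/
def StdPairL (n : ℕ) (σ γ : ℕ × ℕ) (r s : ℕ) (a b : ℕ → ℕ) : Prop :=
  StdPairCond (omegaD' (delta n σ γ r s a b) r s) (omegaC' (delta n σ γ r s a b) r s)
    (omegaAD' (delta n σ γ r s a b) r s) r s a b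

/-- A relation move on a pair of labeled chains (Δ as prescribed by the labels). -/
def MoveL (n : ℕ) (σ γ : ℕ × ℕ) (r s : ℕ) (a b a' b' : ℕ → ℕ) : Prop :=
  DiagMoveP (omegaD' (delta n σ γ r s a b) r s) s a b a' b' ∨
  ColMoveP (omegaC' (delta n σ γ r s a b) r s) s a b a' b' ∨
  ADMoveP (omegaAD' (delta n σ γ r s a b) r s) r a b a' b'

/-- A tabel with `l` rows: row `i` (1 ≤ i ≤ l) is the labeled chain
`(lab i, ent i)` of length `len i`, and the rows are ordered decreasingly by `≥_c`. -/
def IsTabel (n l : ℕ) (lab : ℕ → ℕ × ℕ) (len : ℕ → ℕ) (ent : ℕ → ℕ → ℕ) : Prop :=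
  (∀ i, 1 ≤ i → i ≤ l → LabeledChain n (lab i) (len i) (ent i)) ∧
  (∀ i, 1 ≤ i → i < l →
    GeC n (lab i) (len i) (ent i) (lab (i + 1)) (len (i + 1)) (ent (i + 1)))

/-- A tabel is a standard form: the standard-form conditions hold for each
pair of rows `i < j`. -/
def StdTabel (n l : ℕ) (lab : ℕ → ℕ × ℕ) (len : ℕ → ℕ) (ent : ℕ → ℕ → ℕ) : Prop :=
  ∀ i j, 1 ≤ i → i < j → j ≤ l →
    StdPairL n (lab i) (lab j) (len i) (len j) (ent i) (ent j)

/-- Standardness of a quadratic factor `x_i · z_{σ,a}` (condition (ii) of the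
standard-monomial construction). -/
def XZStd (i : ℕ) (σ : ℕ × ℕ) (r : ℕ) (a : ℕ → ℕ) : Prop :=
  i ≤ a 1 ∨ (a 1 < i ∧ (σ.2 < i ∨ i ∈ IntervalOf r a))

/-- A general r×r minor of a Hankel matrix: rows `p 1 < … < p r`,
columns `q 1 < … < q r`, entry (i,j) = x_{p i + q j - 1}. -/
def genMinor (K : Type*) [CommRing K] (r : ℕ) (p q : ℕ → ℕ) : MvPolynomial ℕ K :=
  (Matrix.of fun i j : Fin r =>
    (X (p ((i : ℕ) + 1) + q ((j : ℕ) + 1) - 1) : MvPolynomial ℕ K)).det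


section Stmt0Aux

open Finsupp

private lemma step_mono_le {r : ℕ} {f : ℕ → ℕ} (h : ∀ i, 1 ≤ i → i < r → f i ≤ f (i + 1)) :
    ∀ i j, 1 ≤ i → i ≤ j → j ≤ r → f i ≤ f j := by
  intro i j hi hij hjr
  induction j with
  | zero => exact absurd hij (by omega)
  | succ j ih =>
    rcases Nat.lt_or_ge i (j + 1) with h' | h'
    · exact le_trans (ih (by omega) (by omega)) (h j (by omega) (by omega))
    · have hij' : i = j + 1 := by omega
      exact hij' ▸ le_rfl

private lemma step_mono_lt {r : ℕ} {f : ℕ → ℕ} (h : ∀ i, 1 ≤ i → i < r → f i < f (i + 1)) :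
    ∀ i j, 1 ≤ i → i < j → j ≤ r → f i < f j := by
  intro i j hi hij hjr
  induction j with
  | zero => exact absurd hij (by omega)
  | succ j ih =>
    rcases Nat.lt_or_ge i j with h' | h'
    · exact lt_trans (ih h' (by omega)) (h j (by omega) (by omega))
    · have hij' : i = j := by omega
      exact hij' ▸ h i hi (by omega)

private lemma chain_gap {r : ℕ} {a : ℕ → ℕ} (h : IsChainOn r a) :
    ∀ i j, 1 ≤ i → i ≤ j → j ≤ r → a i + 2 * (j - i) ≤ a j := by
  intro i j hi hij hjr
  induction j with
  | zero => exact absurd hij (by omega)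
  | succ j ih =>
    rcases Nat.lt_or_ge i (j + 1) with h' | h'
    · have h1 := ih (by omega) (by omega)
      have h2 := h j (by omega) (by omega)
      omega
    · have hij' : i = j + 1 := by omega
      subst hij'
      omega

private lemma prod_X_eq {K : Type*} [CommRing K] {ι : Type*} (s : Finset ι) (f : ι → ℕ) :
    (∏ i ∈ s, (X (f i) : MvPolynomial ℕ K))
      = monomial (∑ i ∈ s, Finsupp.single (f i) 1) (1 : K) := by
  classical
  induction s using Finset.induction with
  | empty => simp
  | @insert x s hx ih =>
    rw [Finset.prod_insert hx, Finset.sum_insert hx, ih,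
      ← pow_one (X (f x) : MvPolynomial ℕ K), X_pow_eq_monomial, monomial_mul, one_mul]

private lemma expDeg_add (u v : ℕ →₀ ℕ) : expDeg (u + v) = expDeg u + expDeg v :=
  Finsupp.sum_add_index' (fun _ => rfl) (fun _ _ _ => rfl)

private lemma expDeg_single (n : ℕ) : expDeg (Finsupp.single n 1) = 1 :=
  Finsupp.sum_single_index rfl

private lemma expDeg_sum_single {ι : Type*} (s : Finset ι) (f : ι → ℕ) :
    expDeg (∑ i ∈ s, Finsupp.single (f i) 1) = s.card := by
  classical
  induction s using Finset.induction with
  | empty => simp [expDeg]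
  | @insert x s hx ih =>
    rw [Finset.sum_insert hx, expDeg_add, expDeg_single, ih,
      Finset.card_insert_of_notMem hx]
    omega

private lemma sum_single_apply {ι : Type*} (s : Finset ι) (f : ι → ℕ) (j : ℕ) :
    (∑ i ∈ s, Finsupp.single (f i) 1) j = ∑ i ∈ s, (if f i = j then 1 else 0) := by
  classical
  rw [Finsupp.finset_sum_apply]
  exact Finset.sum_congr rfl fun i _ => Finsupp.single_apply

private lemma degLexLt_asymm {u v : ℕ →₀ ℕ} (h1 : DegLexLt u v) (h2 : DegLexLt v u) : False := by
  rcases h1 with h1 | ⟨e1, l1⟩ <;> rcases h2 with h2 | ⟨e2, l2⟩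
  · omega
  · omega
  · omega
  · exact lt_asymm l1 l2

private lemma isLeadMono_unique {K : Type*} [CommRing K] {f : MvPolynomial ℕ K} {u v : ℕ →₀ ℕ}
    (hu : IsLeadMono f u) (hv : IsLeadMono f v) : u = v := by
  by_contra hne
  exact degLexLt_asymm (hu.2 v hv.1 (Ne.symm hne)) (hv.2 u hu.1 hne)

private lemma list_map_eq {a c : ℕ → ℕ} : ∀ l : List ℕ, l.map a = l.map c → ∀ x ∈ l, a x = c x := by
  intro l
  induction l with
  | nil => intro _ x hx; simp at hx
  | cons y l ih =>
    intro h x hx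
    rw [List.map_cons, List.map_cons] at h
    injection h with h1 h2
    rcases List.mem_cons.mp hx with rfl | hx'
    · exact h1
    · exact ih h2 x hx'

private lemma chainExp_inj {r : ℕ} {a c : ℕ → ℕ}
    (ha : ∀ i j, 1 ≤ i → i ≤ j → j ≤ r → a i ≤ a j)
    (hc : ∀ i j, 1 ≤ i → i ≤ j → j ≤ r → c i ≤ c j)
    (h : chainExp r a = chainExp r c) : ∀ i, 1 ≤ i → i ≤ r → a i = c i := by
  classical
  have key : ∀ f : ℕ → ℕ, ∀ j : ℕ,
      Multiset.count j (Multiset.map f (Finset.Icc 1 r).val)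
        = ∑ i ∈ Finset.Icc 1 r, (if f i = j then 1 else 0) := by
    intro f j
    rw [Multiset.count_map]
    have h1 : Multiset.card (Multiset.filter (fun i => j = f i) (Finset.Icc 1 r).val)
        = ((Finset.Icc 1 r).filter fun i => j = f i).card := rfl
    rw [h1, Finset.card_filter]
    exact Finset.sum_congr rfl fun i _ => by simp [eq_comm]
  have hcnt : ∀ j, Multiset.count j (Multiset.map a (Finset.Icc 1 r).val)
      = Multiset.count j (Multiset.map c (Finset.Icc 1 r).val) := by
    intro j
    have happ : chainExp r a j = chainExp r c j := by rw [h]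
    rw [chainExp, chainExp, sum_single_apply, sum_single_apply] at happ
    rw [key, key, happ]
  have hms : Multiset.map a (Finset.Icc 1 r).val = Multiset.map c (Finset.Icc 1 r).val :=
    Multiset.ext.mpr hcnt
  set l := Finset.sort (Finset.Icc 1 r) (· ≤ ·) with hl
  have hcoe : ∀ f : ℕ → ℕ, (↑(l.map f) : Multiset ℕ)
      = Multiset.map f (Finset.Icc 1 r).val := by
    intro f
    rw [← Multiset.map_coe, hl, Finset.sort_eq]
  have hperm : (l.map a).Perm (l.map c) := by
    rw [← Multiset.coe_eq_coe, hcoe, hcoe, hms]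
  have hsorted : ∀ f : ℕ → ℕ, (∀ i j, 1 ≤ i → i ≤ j → j ≤ r → f i ≤ f j) →
      (l.map f).Pairwise (· ≤ ·) := by
    intro f hf
    rw [List.pairwise_map]
    refine List.Pairwise.imp_of_mem ?_ (Finset.pairwise_sort _ (· ≤ ·))
    intro x y hx hy hxy
    have hx' : x ∈ Finset.Icc 1 r := Finset.mem_sort (· ≤ ·) |>.mp hx
    have hy' : y ∈ Finset.Icc 1 r := Finset.mem_sort (· ≤ ·) |>.mp hy
    rw [Finset.mem_Icc] at hx' hy'
    exact hf x y hx'.1 hxy hy'.2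
  have heql : l.map a = l.map c :=
    List.Perm.eq_of_pairwise' (hsorted a ha) (hsorted c hc) hperm
  intro i h1 h2
  refine list_map_eq l heql i ?_
  rw [hl, Finset.mem_sort, Finset.mem_Icc]
  omega

/-- The exponent vector of the permutation term `σ` in the Leibniz expansion. -/
private def permExp (r : ℕ) (p q : ℕ → ℕ) (σ : Equiv.Perm (Fin r)) : ℕ →₀ ℕ :=
  ∑ i : Fin r, Finsupp.single (p ((σ i : ℕ) + 1) + q ((i : ℕ) + 1) - 1) 1

private lemma permExp_apply (r : ℕ) (p q : ℕ → ℕ) (σ : Equiv.Perm (Fin r)) (j : ℕ) :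
    permExp r p q σ j
      = ∑ i : Fin r, (if p ((σ i : ℕ) + 1) + q ((i : ℕ) + 1) - 1 = j then 1 else 0) := by
  simp only [permExp]
  exact sum_single_apply _ _ j

private lemma icc_sum_eq_fin {M : Type*} [AddCommMonoid M] (r : ℕ) (f : ℕ → M) :
    ∑ i ∈ Finset.Icc 1 r, f i = ∑ i : Fin r, f ((i : ℕ) + 1) := by
  rw [Fin.sum_univ_eq_sum_range (fun i => f (i + 1)) r]
  induction r with
  | zero => simp
  | succ r ih =>
    rw [Finset.sum_Icc_succ_top (by omega), ih, Finset.sum_range_succ]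

private lemma permExp_one (r : ℕ) (p q : ℕ → ℕ) :
    permExp r p q 1 = chainExp r (fun i => p i + q i - 1) := by
  simp only [permExp, chainExp, Equiv.Perm.one_apply]
  rw [icc_sum_eq_fin]

private lemma permExp_lt {r : ℕ} {p q : ℕ → ℕ}
    (hp : ∀ i j, 1 ≤ i → i < j → j ≤ r → p i < p j)
    (hq : ∀ i j, 1 ≤ i → i < j → j ≤ r → q i < q j)
    (hp1 : ∀ i, 1 ≤ i → i ≤ r → 1 ≤ p i) (hq1 : ∀ i, 1 ≤ i → i ≤ r → 1 ≤ q i)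
    {σ : Equiv.Perm (Fin r)} (hσ : σ ≠ 1) :
    toLex (permExp r p q σ) < toLex (permExp r p q 1) := by
  classical
  have hne : (Finset.univ.filter fun i : Fin r => σ i ≠ i).Nonempty := by
    by_contra hcon
    rw [Finset.not_nonempty_iff_eq_empty, Finset.filter_eq_empty_iff] at hcon
    exact hσ (Equiv.ext fun i => by simpa using hcon (Finset.mem_univ i))
  set k := Finset.min' _ hne with hkdef
  have hkmem : σ k ≠ k := by
    have := Finset.min'_mem _ hne
    simpa using this
  have hmin : ∀ i : Fin r, σ i ≠ i → k ≤ i := fun i hi => Finset.min'_le _ _ (by simp [hi])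
  have hfix : ∀ i : Fin r, i < k → σ i = i := by
    intro i hi
    by_contra hcon
    exact absurd (hmin i hcon) (not_le.mpr hi)
  have hge : ∀ i : Fin r, k ≤ i → (k : ℕ) ≤ (σ i : ℕ) := by
    intro i hi
    by_contra hcon
    push_neg at hcon
    have hlt : σ i < k := Fin.lt_def.mpr hcon
    have h2 : σ (σ i) = σ i := hfix _ hlt
    have h3 : σ i = i := σ.injective h2
    rw [h3] at hlt
    exact absurd hi (not_le.mpr hlt)
  have hσk : (k : ℕ) < (σ k : ℕ) :=
    lt_of_le_of_ne (hge k le_rfl) (fun h => hkmem (Fin.ext h.symm))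
  have hkr : (k : ℕ) < r := k.isLt
  have pmle : ∀ x y : Fin r, (x : ℕ) ≤ (y : ℕ) → p ((x : ℕ) + 1) ≤ p ((y : ℕ) + 1) := by
    intro x y hxy
    rcases Nat.eq_or_lt_of_le hxy with h | h
    · rw [h]
    · exact le_of_lt (hp _ _ (by omega) (by omega) (by have := y.isLt; omega))
  have qmle : ∀ x y : Fin r, (x : ℕ) ≤ (y : ℕ) → q ((x : ℕ) + 1) ≤ q ((y : ℕ) + 1) := by
    intro x y hxy
    rcases Nat.eq_or_lt_of_le hxy with h | h
    · rw [h]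
    · exact le_of_lt (hq _ _ (by omega) (by omega) (by have := y.isLt; omega))
  have hpk : 1 ≤ p ((k : ℕ) + 1) := hp1 _ (by omega) (by omega)
  have hqk : 1 ≤ q ((k : ℕ) + 1) := hq1 _ (by omega) (by omega)
  have hmain : Finsupp.Lex (· < ·) (· < ·) (permExp r p q σ) (permExp r p q 1) := by
    rw [Finsupp.lex_def]
    refine ⟨p ((k : ℕ) + 1) + q ((k : ℕ) + 1) - 1, ?_, ?_⟩
    · intro dd hdd
      rw [permExp_apply, permExp_apply]
      simp only [Equiv.Perm.one_apply]
      refine Finset.sum_congr rfl fun i _ => ?_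
      by_cases hik : i < k
      · rw [hfix i hik]; rfl
      · push_neg at hik
        have hki : (k : ℕ) ≤ (i : ℕ) := Fin.le_def.mp hik
        have b1 := pmle k (σ i) (hge i hik)
        have b2 := qmle k i hki
        have b3 := pmle k i hki
        rw [if_neg (by omega)]; exact (if_neg (by omega)).symm
    · rw [permExp_apply, permExp_apply]
      simp only [Equiv.Perm.one_apply]
      have hLHS : (∑ i : Fin r,
          (if p ((σ i : ℕ) + 1) + q ((i : ℕ) + 1) - 1
            = p ((k : ℕ) + 1) + q ((k : ℕ) + 1) - 1 then 1 else 0)) = 0 := by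
        refine Finset.sum_eq_zero fun i _ => ?_
        rcases lt_trichotomy i k with h | h | h
        · rw [hfix i h]
          have hik : (i : ℕ) < (k : ℕ) := Fin.lt_def.mp h
          have b1 := hp ((i : ℕ) + 1) ((k : ℕ) + 1) (by omega) (by omega) (by omega)
          have b2 := hq ((i : ℕ) + 1) ((k : ℕ) + 1) (by omega) (by omega) (by omega)
          have hpi : 1 ≤ p ((i : ℕ) + 1) := hp1 _ (by omega) (by have := i.isLt; omega)
          have hqi : 1 ≤ q ((i : ℕ) + 1) := hq1 _ (by omega) (by have := i.isLt; omega)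
          rw [if_neg (by omega)]
        · subst h
          have b1 := hp ((k : ℕ) + 1) ((σ k : ℕ) + 1) (by omega) (by omega)
            (by have := (σ k).isLt; omega)
          rw [if_neg (by omega)]
        · have hki : (k : ℕ) < (i : ℕ) := Fin.lt_def.mp h
          have b1 := pmle k (σ i) (hge i (le_of_lt h))
          have b2 := hq ((k : ℕ) + 1) ((i : ℕ) + 1) (by omega) (by omega)
            (by have := i.isLt; omega)
          rw [if_neg (by omega)]
      rw [hLHS]
      have hterm : (if p ((k : ℕ) + 1) + q ((k : ℕ) + 1) - 1
          = p ((k : ℕ) + 1) + q ((k : ℕ) + 1) - 1 then 1 else 0) = 1 := if_pos rfl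
      have hle : (1 : ℕ) ≤ ∑ i : Fin r,
          (if p ((i : ℕ) + 1) + q ((i : ℕ) + 1) - 1
            = p ((k : ℕ) + 1) + q ((k : ℕ) + 1) - 1 then 1 else 0) := by
        calc (1 : ℕ) = _ := hterm.symm
        _ ≤ _ := Finset.single_le_sum (f := fun i : Fin r =>
            (if p ((i : ℕ) + 1) + q ((i : ℕ) + 1) - 1
              = p ((k : ℕ) + 1) + q ((k : ℕ) + 1) - 1 then 1 else 0))
            (fun i _ => Nat.zero_le _) (Finset.mem_univ k)
      exact lt_of_lt_of_le Nat.zero_lt_one hle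
  exact hmain

private lemma genMinor_isLead {K : Type*} [Field K] (r : ℕ) (p q : ℕ → ℕ)
    (hp : ∀ i, 1 ≤ i → i < r → p i < p (i + 1))
    (hq : ∀ j, 1 ≤ j → j < r → q j < q (j + 1))
    (hp1 : ∀ i, 1 ≤ i → i ≤ r → 1 ≤ p i)
    (hq1 : ∀ i, 1 ≤ i → i ≤ r → 1 ≤ q i) :
    IsLeadMono (genMinor K r p q) (chainExp r fun i => p i + q i - 1) := by
  classical
  have hp' := step_mono_lt hp
  have hq' := step_mono_lt hq
  have hco : ∀ v, MvPolynomial.coeff v (genMinor K r p q)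
      = ∑ σ : Equiv.Perm (Fin r),
          Equiv.Perm.sign σ • (if permExp r p q σ = v then (1 : K) else 0) := by
    intro v
    rw [genMinor, Matrix.det_apply, MvPolynomial.coeff_sum]
    refine Finset.sum_congr rfl fun σ _ => ?_
    rw [MvPolynomial.coeff_smul]
    congr 1
    have hprod : (∏ i : Fin r,
        (Matrix.of fun i j : Fin r =>
          (X (p ((i : ℕ) + 1) + q ((j : ℕ) + 1) - 1) : MvPolynomial ℕ K)) (σ i) i)
        = monomial (permExp r p q σ) (1 : K) := by
      simp only [Matrix.of_apply]
      rw [prod_X_eq]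
      rfl
    rw [hprod, MvPolynomial.coeff_monomial]
  constructor
  · rw [MvPolynomial.mem_support_iff, hco]
    rw [Finset.sum_eq_single (1 : Equiv.Perm (Fin r))]
    · rw [permExp_one, if_pos rfl, Equiv.Perm.sign_one, one_smul]
      exact one_ne_zero
    · intro σ _ hσ1
      rw [← permExp_one r p q, if_neg, smul_zero]
      intro hEq
      have hlt := permExp_lt hp' hq' hp1 hq1 hσ1
      rw [hEq] at hlt
      exact lt_irrefl _ hlt
    · intro hmem
      exact absurd (Finset.mem_univ _) hmem
  · intro v hv hvne
    have hex : ∃ σ : Equiv.Perm (Fin r), permExp r p q σ = v := by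
      by_contra hno
      push_neg at hno
      rw [MvPolynomial.mem_support_iff, hco v] at hv
      exact hv (Finset.sum_eq_zero fun σ _ => by rw [if_neg (hno σ), smul_zero])
    obtain ⟨σ, rfl⟩ := hex
    have hσ1 : σ ≠ 1 := fun h => hvne (by rw [h, permExp_one])
    refine Or.inr ⟨?_, ?_⟩
    · simp only [permExp, chainExp]
      rw [expDeg_sum_single, expDeg_sum_single]
      simp only [Finset.card_univ, Fintype.card_fin, Nat.card_Icc]
      omega
    · rw [← permExp_one r p q]
      exact permExp_lt hp' hq' hp1 hq1 hσ1

end Stmt0Aux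

/-- a monomial `x_{a 1} ⋯ x_{a r}` with weakly increasing indices is the
leading term of an r×r minor of some Hankel matrix `H_t` (t ≥ r) iff `a` is a chain. -/
theorem stmt0 {K : Type*} [Field K] (n r : ℕ) (hr : 1 ≤ r) (a : ℕ → ℕ)
    (hmono : ∀ i, 1 ≤ i → i < r → a i ≤ a (i + 1))
    (hb : ∀ i, 1 ≤ i → i ≤ r → 1 ≤ a i ∧ a i ≤ n) :
    (∃ t, r ≤ t ∧ t ≤ (n + 1) / 2 ∧ ∃ p q : ℕ → ℕ,
        (∀ i, 1 ≤ i → i < r → p i < p (i + 1)) ∧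
        (∀ j, 1 ≤ j → j < r → q j < q (j + 1)) ∧
        (∀ i, 1 ≤ i → i ≤ r → 1 ≤ p i ∧ p i ≤ t) ∧
        (∀ j, 1 ≤ j → j ≤ r → 1 ≤ q j ∧ q j ≤ n - t + 1) ∧
        IsLeadMono (genMinor K r p q) (chainExp r a)) ↔
      IsChainOn r a := by
  constructor
  · rintro ⟨t, htr, htn, p, q, hps, hqs, hpb, hqb, hlead⟩
    have hlead' := genMinor_isLead (K := K) r p q hps hqs
      (fun i h1 h2 => (hpb i h1 h2).1) (fun j h1 h2 => (hqb j h1 h2).1)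
    have heq := isLeadMono_unique hlead hlead'
    have hp' := step_mono_lt hps
    have hq' := step_mono_lt hqs
    have hept : ∀ i, 1 ≤ i → i ≤ r → a i = p i + q i - 1 := by
      refine chainExp_inj (step_mono_le hmono) ?_ heq
      intro i j h1 h2 h3
      rcases Nat.eq_or_lt_of_le h2 with h | h
      · rw [h]
      · have b1 := hp' i j h1 h h3
        have b2 := hq' i j h1 h h3
        omega
    intro i h1 h2
    have e1 := hept i h1 (by omega)
    have e2 := hept (i + 1) (by omega) (by omega)
    have b1 := hps i h1 h2
    have b2 := hqs i h1 h2
    have b3 := (hpb i h1 (by omega)).1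
    have b4 := (hqb i h1 (by omega)).1
    omega
  · intro hchain
    have hgap := chain_gap hchain
    have ha1 : 1 ≤ a 1 := (hb 1 le_rfl hr).1
    have har : a r ≤ n := (hb r hr le_rfl).2
    have haj : ∀ j, 1 ≤ j → j ≤ r → j ≤ a j ∧ a j + (r - j) ≤ n := by
      intro j h1 h2
      have g1 := hgap 1 j le_rfl h1 h2
      have g2 := hgap j r h1 h2 le_rfl
      omega
    have hqstep : ∀ j, 1 ≤ j → j < r → a j + 1 - j < a (j + 1) + 1 - (j + 1) := by
      intro j h1 h2
      have hc := hchain j h1 h2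
      have := (haj j h1 (by omega)).1
      omega
    have hqbd : ∀ j, 1 ≤ j → j ≤ r → 1 ≤ a j + 1 - j ∧ a j + 1 - j ≤ n - r + 1 := by
      intro j h1 h2
      have := haj j h1 h2
      omega
    refine ⟨r, le_rfl, ?_, (fun i => i), (fun j => a j + 1 - j),
      fun i h1 h2 => Nat.lt_succ_self i, hqstep, fun i h1 h2 => ⟨h1, h2⟩, hqbd, ?_⟩
    · have := hgap 1 r le_rfl hr le_rfl
      omega
    · have hl := genMinor_isLead (K := K) r (fun i => i) (fun j => a j + 1 - j)
        (fun i h1 h2 => Nat.lt_succ_self i) hqstep (fun i h1 h2 => h1)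
        (fun j h1 h2 => (hqbd j h1 h2).1)
      have hce : chainExp r a
          = chainExp r (fun i => (fun i => i) i + (fun j => a j + 1 - j) i - 1) := by
        unfold chainExp
        refine Finset.sum_congr rfl fun i hi => ?_
        rw [Finset.mem_Icc] at hi
        have := (haj i hi.1 hi.2).1
        congr 1
        show a i = i + (a i + 1 - i) - 1
        omega
      rw [hce]
      exact hl

end
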